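/- If G is a near-bipartite graph with no independent set of size s (s ≥ 4), then ifvs(G) ≤ fvs(G) + s − 3. -/
import Mathlib


open SimpleGraph

/-- `S` is an independent set of `G`. -/
def IsIS {V : Type*} (G : SimpleGraph V) (S : Set V) : Prop :=
  S.Pairwise fun u v => ¬ G.Adj u v

/-- `G` contains no induced subgraph isomorphic to `H`. -/
def HFree {W V : Type*} (H : SimpleGraph W) (G : SimpleGraph V) : Prop :=
  IsEmpty (H ↪g G)

/-- `G` is bipartite: the vertex set splits into two independent sets. -/
def IsBip {V : Type*} (G : SimpleGraph V) : Prop :=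
  ∃ X : Set V, IsIS G X ∧ IsIS G Xᶜ

/-- `S` is a vertex cover of `G`. -/
def IsVC {V : Type*} (G : SimpleGraph V) (S : Finset V) : Prop :=
  ∀ ⦃u v⦄, G.Adj u v → u ∈ S ∨ v ∈ S

/-- minimum size of a vertex cover. -/
noncomputable def vc {V : Type*} (G : SimpleGraph V) : ℕ :=
  sInf {n | ∃ S : Finset V, IsVC G S ∧ S.card = n}

/-- minimum size of an independent vertex cover. -/
noncomputable def ivc {V : Type*} (G : SimpleGraph V) : ℕ :=
  sInf {n | ∃ S : Finset V, IsVC G S ∧ IsIS G ↑S ∧ S.card = n}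

/-- `S` is a feedback vertex set of `G`: removing it leaves a forest. -/
def IsFVS {V : Type*} (G : SimpleGraph V) (S : Finset V) : Prop :=
  (G.induce ((S : Set V)ᶜ)).IsAcyclic

/-- minimum size of a feedback vertex set. -/
noncomputable def fvs {V : Type*} (G : SimpleGraph V) : ℕ :=
  sInf {n | ∃ S : Finset V, IsFVS G S ∧ S.card = n}

/-- minimum size of an independent feedback vertex set. -/
noncomputable def ifvs {V : Type*} (G : SimpleGraph V) : ℕ :=
  sInf {n | ∃ S : Finset V, IsFVS G S ∧ IsIS G ↑S ∧ S.card = n}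

/-- `G` is near-bipartite: it has an independent feedback vertex set. -/
def NearBip {V : Type*} (G : SimpleGraph V) : Prop :=
  ∃ S : Finset V, IsFVS G S ∧ IsIS G ↑S

theorem stmt_13 {V : Type*} [Fintype V] (G : SimpleGraph V) (s : ℕ) (hs : 4 ≤ s)
    (hnb : NearBip G) (hfree : ∀ S : Finset V, IsIS G ↑S → S.card < s) :
    ifvs G ≤ fvs G + (s - 3) := by
  obtain ⟨S, hS, hSi⟩ := hnb
  have h1 : ifvs G ≤ S.card := Nat.sInf_le ⟨S, hS, hSi, rfl⟩
  have h2 : S.card < s := hfree S hSi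
  obtain ⟨T, hT, hTcard⟩ :=
    Nat.sInf_mem (⟨S.card, S, hS, rfl⟩ :
      {n | ∃ T : Finset V, IsFVS G T ∧ T.card = n}.Nonempty)
  by_cases h : 2 ≤ fvs G
  · omega
  · have hT1 : T.card ≤ 1 := by
      unfold fvs at h
      omega
    have hTi : IsIS G ↑T := fun u hu v hv huv =>
      absurd (Finset.card_le_one.mp hT1 u hu v hv) huv
    have h3 : ifvs G ≤ T.card := Nat.sInf_le ⟨T, hT, hTi, rfl⟩
    have hfvsT : fvs G = T.card := by unfold fvs; omega
    omega
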